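/- In the recollement gluing situation, the glued weight structure is unique: if w and w′ are weight structures on 𝒞 such that i_!(= i_*), j_!, j^*, and i^* are all left weight-exact with respect to both (relative to fixed weight structures w_𝒟 on 𝒟 and w_ℰ on ℰ), then w = w′. -/

import Mathlib

open CategoryTheory CategoryTheory.Limits CategoryTheory.Pretriangulated ZeroObject

universe v u

/-- A weight structure (homological convention) on a triangulated category. -/
structure WeightStructure (C : Type u) [Category.{v} C] [Preadditive C] [HasZeroObject C]
    [HasBinaryBiproducts C] [HasShift C ℤ] [∀ n : ℤ, (shiftFunctor C n).Additive]
    [Pretriangulated C] where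
  le : Set C
  ge : Set C
  le_zero : (0 : C) ∈ le
  ge_zero : (0 : C) ∈ ge
  le_retract : ∀ X Y : C, (∃ (i : X ⟶ Y) (r : Y ⟶ X), i ≫ r = 𝟙 X) → Y ∈ le → X ∈ le
  ge_retract : ∀ X Y : C, (∃ (i : X ⟶ Y) (r : Y ⟶ X), i ≫ r = 𝟙 X) → Y ∈ ge → X ∈ ge
  le_add : ∀ X Y : C, X ∈ le → Y ∈ le → (X ⊞ Y) ∈ le
  ge_add : ∀ X Y : C, X ∈ ge → Y ∈ ge → (X ⊞ Y) ∈ ge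
  le_shift : ∀ X : C, X ∈ le → X⟦(-1 : ℤ)⟧ ∈ le
  ge_shift : ∀ X : C, X ∈ ge → X⟦(1 : ℤ)⟧ ∈ ge
  orth : ∀ X ∈ le, ∀ Y ∈ ge, ∀ f : X ⟶ Y⟦(1 : ℤ)⟧, f = 0
  decomp : ∀ M : C, ∃ (B A : C) (f : B ⟶ M) (g : M ⟶ A) (h : A ⟶ B⟦(1 : ℤ)⟧),
    B ∈ le ∧ A⟦(-1 : ℤ)⟧ ∈ ge ∧ Triangle.mk f g h ∈ distTriang C

/-- Gluing data (recollement) `D → C → E` of triangulated categories: the six functors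
`i^* ⊣ i_* (= i_!) ⊣ i^!` and `j_! ⊣ j^* (= j^!) ⊣ j_*`, with `i_*` fully faithful,
`j^* ∘ i_* = 0`, and the two gluing distinguished triangles
`j_! j^* M → M → i_* i^* M → [1]` and `i_* i^! M → M → j_* j^* M → [1]`. -/
structure Recollement (D C E : Type u) [Category.{v} D] [Category.{v} C] [Category.{v} E]
    [Preadditive D] [HasZeroObject D] [HasShift D ℤ]
    [∀ n : ℤ, (shiftFunctor D n).Additive] [Pretriangulated D]
    [Preadditive C] [HasZeroObject C] [HasShift C ℤ]
    [∀ n : ℤ, (shiftFunctor C n).Additive] [Pretriangulated C]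
    [Preadditive E] [HasZeroObject E] [HasShift E ℤ]
    [∀ n : ℤ, (shiftFunctor E n).Additive] [Pretriangulated E] where
  /-- `i_* = i_!` -/
  iStar : D ⥤ C
  /-- `i^*` -/
  iUp : C ⥤ D
  /-- `i^!` -/
  iShriek : C ⥤ D
  /-- `j^* = j^!` -/
  jStar : C ⥤ E
  /-- `j_!` -/
  jShriek : E ⥤ C
  /-- `j_*` -/
  jLower : E ⥤ C
  adj₁ : iUp ⊣ iStar
  adj₂ : iStar ⊣ iShriek
  adj₃ : jShriek ⊣ jStar
  adj₄ : jStar ⊣ jLower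
  iFull : iStar.Full
  iFaithful : iStar.Faithful
  ji_zero : ∀ X : D, IsZero (jStar.obj (iStar.obj X))
  tri₁ : ∀ M : C, ∃ δ : iStar.obj (iUp.obj M) ⟶ (jShriek.obj (jStar.obj M))⟦(1 : ℤ)⟧,
    Triangle.mk (adj₃.counit.app M) (adj₁.unit.app M) δ ∈ distTriang C
  tri₂ : ∀ M : C, ∃ δ : jLower.obj (jStar.obj M) ⟶ (iStar.obj (iShriek.obj M))⟦(1 : ℤ)⟧,
    Triangle.mk (adj₂.counit.app M) (adj₄.unit.app M) δ ∈ distTriang C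

variable {D C E : Type u} [Category.{v} D] [Category.{v} C] [Category.{v} E]
  [Preadditive D] [HasZeroObject D] [HasBinaryBiproducts D] [HasShift D ℤ]
  [∀ n : ℤ, (shiftFunctor D n).Additive] [Pretriangulated D]
  [Preadditive C] [HasZeroObject C] [HasBinaryBiproducts C] [HasShift C ℤ]
  [∀ n : ℤ, (shiftFunctor C n).Additive] [Pretriangulated C]
  [Preadditive E] [HasZeroObject E] [HasBinaryBiproducts E] [HasShift E ℤ]
  [∀ n : ℤ, (shiftFunctor E n).Additive] [Pretriangulated E]

section Aux

variable {C : Type u} [Category.{v} C] [Preadditive C] [HasZeroObject C]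
  [HasBinaryBiproducts C] [HasShift C ℤ] [∀ n : ℤ, (shiftFunctor C n).Additive]
  [Pretriangulated C]

/-- If the second map of a distinguished triangle vanishes, `obj₂` is a retract of `obj₁`. -/
lemma retract₁_of_mor₂_eq_zero (T : Triangle C) (hT : T ∈ distTriang C) (h : T.mor₂ = 0) :
    ∃ (i : T.obj₂ ⟶ T.obj₁) (r : T.obj₁ ⟶ T.obj₂), i ≫ r = 𝟙 T.obj₂ := by
  obtain ⟨g, hg⟩ := Triangle.coyoneda_exact₂ T hT (𝟙 T.obj₂) (by simp [h])
  exact ⟨g, T.mor₁, hg.symm⟩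

/-- If the first map of a distinguished triangle vanishes, `obj₂` is a retract of `obj₃`. -/
lemma retract₃_of_mor₁_eq_zero (T : Triangle C) (hT : T ∈ distTriang C) (h : T.mor₁ = 0) :
    ∃ (i : T.obj₂ ⟶ T.obj₃) (r : T.obj₃ ⟶ T.obj₂), i ≫ r = 𝟙 T.obj₂ := by
  obtain ⟨g, hg⟩ := Triangle.yoneda_exact₂ T hT (𝟙 T.obj₂) (by simp [h])
  exact ⟨T.mor₂, g, hg.symm⟩

lemma WeightStructure.hom_zero (w : WeightStructure C) {X R : C}
    (hX : X ∈ w.le) (hR : R⟦(-1 : ℤ)⟧ ∈ w.ge) (f : X ⟶ R) : f = 0 := by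
  have : f ≫ (shiftNegShift R (1 : ℤ)).inv = 0 :=
    w.orth X hX _ hR _
  calc f = (f ≫ (shiftNegShift R (1 : ℤ)).inv) ≫ (shiftNegShift R (1 : ℤ)).hom := by rw [Category.assoc, Iso.inv_hom_id, Category.comp_id]
  _ = 0 := by rw [this, zero_comp]

/-- The `ge` class is determined by the `le` class. -/
lemma WeightStructure.mem_ge_iff (w : WeightStructure C) (Y : C) :
    Y ∈ w.ge ↔ ∀ X ∈ w.le, ∀ f : X ⟶ Y⟦(1 : ℤ)⟧, f = 0 := by
  constructor
  · intro hY X hX f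
    exact w.orth X hX Y hY f
  · intro h
    obtain ⟨B, A, f, g, δ, hB, hA, hT⟩ := w.decomp (Y⟦(1 : ℤ)⟧)
    have hf : f = 0 := h B hB f
    obtain ⟨i, r, hir⟩ := retract₃_of_mor₁_eq_zero _ hT hf
    refine w.ge_retract Y (A⟦(-1 : ℤ)⟧) ⟨(shiftShiftNeg Y (1 : ℤ)).inv ≫
      (shiftFunctor C (-1 : ℤ)).map i, (shiftFunctor C (-1 : ℤ)).map r ≫
      (shiftShiftNeg Y (1 : ℤ)).hom, ?_⟩ hA
    erw [Category.assoc, ← Functor.map_comp_assoc, hir, CategoryTheory.Functor.map_id,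
      Category.id_comp, Iso.inv_hom_id]

/-- The `le` class is determined by the `ge` class. -/
lemma WeightStructure.mem_le_iff (w : WeightStructure C) (X : C) :
    X ∈ w.le ↔ ∀ Y ∈ w.ge, ∀ f : X ⟶ Y⟦(1 : ℤ)⟧, f = 0 := by
  constructor
  · intro hX Y hY f
    exact w.orth X hX Y hY f
  · intro h
    obtain ⟨B, A, f, g, δ, hB, hA, hT⟩ := w.decomp X
    have hg : g = 0 := by
      have h0 : g ≫ (shiftNegShift A (1 : ℤ)).inv = 0 := h _ hA _
      calc g = (g ≫ (shiftNegShift A (1 : ℤ)).inv) ≫ (shiftNegShift A (1 : ℤ)).hom := by rw [Category.assoc, Iso.inv_hom_id, Category.comp_id]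
      _ = 0 := by rw [h0, zero_comp]
    obtain ⟨i, r, hir⟩ := retract₁_of_mor₂_eq_zero _ hT hg
    exact w.le_retract X B ⟨i, r, hir⟩ hB

/-- The `le` class is closed under extensions. -/
lemma WeightStructure.le_ext (w : WeightStructure C) (T : Triangle C) (hT : T ∈ distTriang C)
    (h₁ : T.obj₁ ∈ w.le) (h₃ : T.obj₃ ∈ w.le) : T.obj₂ ∈ w.le := by
  obtain ⟨B, A, f, g, δ, hB, hA, hT'⟩ := w.decomp T.obj₂
  have hg : g = 0 := by
    have h0 : T.mor₁ ≫ g = 0 := w.hom_zero h₁ hA _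
    obtain ⟨φ, hφ⟩ := Triangle.yoneda_exact₂ T hT g h0
    rw [hφ, w.hom_zero h₃ hA φ, comp_zero]
  obtain ⟨i, r, hir⟩ := retract₁_of_mor₂_eq_zero _ hT' hg
  exact w.le_retract T.obj₂ B ⟨i, r, hir⟩ hB

end Aux

/-- Uniqueness of the glued weight structure: if `w` and `w'` are weight structures on
the middle category `C` of a recollement such that `i_! (= i_*)`, `j_!`, `j^*` and `i^*`
are left weight-exact with respect to both (relative to fixed weight structures on `D`
and `E`), then `w = w'`. -/
theorem stmt18 (R : Recollement D C E)
    [R.iStar.CommShift ℤ] [R.iStar.IsTriangulated]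
    [R.iUp.CommShift ℤ] [R.iUp.IsTriangulated]
    [R.iShriek.CommShift ℤ] [R.iShriek.IsTriangulated]
    [R.jStar.CommShift ℤ] [R.jStar.IsTriangulated]
    [R.jShriek.CommShift ℤ] [R.jShriek.IsTriangulated]
    [R.jLower.CommShift ℤ] [R.jLower.IsTriangulated]
    (wD : WeightStructure D) (wE : WeightStructure E)
    (w w' : WeightStructure C)
    (h1 : ∀ X ∈ wD.le, R.iStar.obj X ∈ w.le)
    (h2 : ∀ X ∈ wE.le, R.jShriek.obj X ∈ w.le)
    (h3 : ∀ M ∈ w.le, R.jStar.obj M ∈ wE.le)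
    (h4 : ∀ M ∈ w.le, R.iUp.obj M ∈ wD.le)
    (h1' : ∀ X ∈ wD.le, R.iStar.obj X ∈ w'.le)
    (h2' : ∀ X ∈ wE.le, R.jShriek.obj X ∈ w'.le)
    (h3' : ∀ M ∈ w'.le, R.jStar.obj M ∈ wE.le)
    (h4' : ∀ M ∈ w'.le, R.iUp.obj M ∈ wD.le) :
    w = w' := by
  have hle : w.le = w'.le := by
    apply Set.Subset.antisymm
    · intro M hM
      obtain ⟨δ, hT⟩ := R.tri₁ M
      exact w'.le_ext _ hT (h2' _ (h3 M hM)) (h1' _ (h4 M hM))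
    · intro M hM
      obtain ⟨δ, hT⟩ := R.tri₁ M
      exact w.le_ext _ hT (h2 _ (h3' M hM)) (h1 _ (h4' M hM))
  have hge : w.ge = w'.ge := by
    ext Y
    rw [w.mem_ge_iff, w'.mem_ge_iff, hle]
  cases w; cases w'
  cases hle; cases hge
  rfl
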